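/- Let Θ and R be finite sets and s : Θ → Δ(R) a map to probability distributions on R (a 'communication mechanism'). Define the bipartite graph G(s) on vertex sets Θ and R linking θ and r iff r is in the support of s(θ). If there exist linear orders ≽_Θ on Θ and ≽_R on R making s monotone (for all θ ≻ θ', r ∈ supp(s(θ)), r' ∈ supp(s(θ')), we have r ≽ r'), then G(s) is acyclic. -/

import Mathlib

/-- s θ is a probability distribution on a finite type, for each θ. -/
def IsMech {Θ R : Type*} [Fintype R] (s : Θ → R → ℝ) : Prop :=
  ∀ θ, (∀ r, 0 ≤ s θ r) ∧ ∑ r, s θ r = 1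

/-- The bipartite graph of a communication mechanism: θ is linked to r iff r ∈ supp(s θ). -/
def mechGraph {Θ R : Type*} (s : Θ → R → ℝ) : SimpleGraph (Θ ⊕ R) :=
  SimpleGraph.fromRel (fun a b =>
    match a, b with
    | Sum.inl θ, Sum.inr r => 0 < s θ r
    | _, _ => False)

/-- s is monotone with respect to a (reflexive total) order leΘ on Θ and an order leR on R:
whenever θ is strictly above θ', every action in supp(s θ) is weakly above every action in
supp(s θ'). Here `¬ leΘ θ θ'` expresses θ ≻ θ' for a total order leΘ. -/
def MonoMech {Θ R : Type*} (s : Θ → R → ℝ) (leΘ : Θ → Θ → Prop) (leR : R → R → Prop) : Prop :=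
  ∀ θ θ', ¬ leΘ θ θ' → ∀ r r', 0 < s θ r → 0 < s θ' r' → leR r' r

/-- Adjacency in `mechGraph` forces the bipartite structure. -/
lemma mech_adj_cases {Θ R : Type*} {s : Θ → R → ℝ} {a b : Θ ⊕ R}
    (h : (mechGraph s).Adj a b) :
    (∃ θ r, a = Sum.inl θ ∧ b = Sum.inr r ∧ 0 < s θ r) ∨
    (∃ θ r, a = Sum.inr r ∧ b = Sum.inl θ ∧ 0 < s θ r) := by
  rw [mechGraph, SimpleGraph.fromRel_adj] at h
  obtain ⟨-, h⟩ := h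
  rcases a with θ | r <;> rcases b with θ' | r'
  · simp at h
  · exact Or.inl ⟨θ, r', rfl, rfl, by simpa using h⟩
  · exact Or.inr ⟨θ', r, rfl, rfl, by simpa using h⟩
  · simp at h

lemma walk_support_getElem {V : Type*} {G : SimpleGraph V} {u v : V} (p : G.Walk u v) :
    ∀ (i : ℕ) (hi : i < p.support.length), p.support[i] = p.getVert i := by
  induction p with
  | nil =>
      intro i hi
      simp only [SimpleGraph.Walk.support_nil, List.length_cons, List.length_nil] at hi
      have h0 : i = 0 := by omega
      subst h0; simp
  | cons h q ih =>
      intro i hi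
      cases i with
      | zero => simp
      | succ n =>
          rw [SimpleGraph.Walk.getVert_cons_succ]
          simp only [SimpleGraph.Walk.support_cons, List.getElem_cons_succ]
          exact ih n (by simpa [SimpleGraph.Walk.support_cons] using hi)

lemma cycle_getVert_inj {V : Type*} {G : SimpleGraph V} {u : V} {p : G.Walk u u}
    (hp : p.IsCycle) {i j : ℕ} (hi1 : 1 ≤ i) (hi2 : i ≤ p.length)
    (hj1 : 1 ≤ j) (hj2 : j ≤ p.length) (h : p.getVert i = p.getVert j) : i = j := by
  have hlen : p.support.length = p.length + 1 := p.length_support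
  have htl : p.support.tail.length = p.length := by
    rw [List.length_tail, hlen]; omega
  have e1 : p.support.tail[i - 1]'(by omega) = p.getVert i := by
    rw [List.getElem_tail]
    rw [walk_support_getElem p (i - 1 + 1) (by omega)]
    congr 1; omega
  have e2 : p.support.tail[j - 1]'(by omega) = p.getVert j := by
    rw [List.getElem_tail]
    rw [walk_support_getElem p (j - 1 + 1) (by omega)]
    congr 1; omega
  have key : p.support.tail[i - 1]'(by omega) = p.support.tail[j - 1]'(by omega) := by
    rw [e1, e2, h]
  have := (List.Nodup.getElem_inj_iff hp.support_nodup).mp key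
  omega

/-- If there exist linear orders on Θ and R making s monotone, then the bipartite graph G(s)
is acyclic. -/
theorem stmt6 {Θ R : Type*} [Fintype Θ] [Fintype R]
    (s : Θ → R → ℝ) (hs : IsMech s)
    (leΘ : Θ → Θ → Prop) (leR : R → R → Prop)
    (hΘ : IsLinearOrder Θ leΘ) (hR : IsLinearOrder R leR)
    (hmono : MonoMech s leΘ leR) :
    (mechGraph s).IsAcyclic := by
  classical
  haveI := hΘ
  haveI := hR
  intro v c hc
  -- there is a Θ-vertex on the cycle
  have h3 := hc.three_le_length
  have hadj0 := c.adj_getVert_succ (i := 0) (by omega)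
  have hΘex : ∃ θ, Sum.inl θ ∈ c.support := by
    rcases mech_adj_cases hadj0 with ⟨θ, r, ha, hb, -⟩ | ⟨θ, r, ha, hb, -⟩
    · exact ⟨θ, SimpleGraph.Walk.mem_support_iff_exists_getVert.mpr ⟨0, ha, by omega⟩⟩
    · exact ⟨θ, SimpleGraph.Walk.mem_support_iff_exists_getVert.mpr ⟨1, hb, by omega⟩⟩
  -- pick a maximal Θ-vertex on the cycle
  letI : LinearOrder Θ :=
    { le := leΘ
      le_refl := fun a => refl_of leΘ a
      le_trans := fun a b c => trans_of leΘ
      le_antisymm := fun a b => antisymm_of leΘ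
      le_total := fun a b => total_of leΘ a b
      toDecidableLE := Classical.decRel _ }
  haveI : DecidablePred (fun θ : Θ => Sum.inl θ ∈ c.support) :=
    fun _ => Classical.propDecidable _
  set S : Finset Θ := Finset.univ.filter (fun θ => Sum.inl θ ∈ c.support) with hS
  have hSne : S.Nonempty := by
    obtain ⟨θ, hθ⟩ := hΘex
    exact ⟨θ, by simp [hS, hθ]⟩
  obtain ⟨θm, hθmS, hmax⟩ := S.exists_max_image id hSne
  have hθmc : Sum.inl θm ∈ c.support := by simpa [hS] using hθmS
  -- rotate the cycle to start at θm
  set c' := c.rotate (Sum.inl θm) hθmc with hc'def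
  have hc' : c'.IsCycle := hc.rotate hθmc
  have hL : 3 ≤ c'.length := hc'.three_le_length
  set L := c'.length with hLdef
  -- maximality on the rotated cycle
  have hmax' : ∀ θ, Sum.inl θ ∈ c'.support → leΘ θ θm := by
    intro θ hθ
    rw [c'.support_eq_cons] at hθ
    rcases List.mem_cons.mp hθ with h | h
    · cases h; exact refl_of leΘ θm
    · have : Sum.inl θ ∈ c.support.tail :=
        (SimpleGraph.Walk.support_rotate c (Sum.inl θm) hθmc).mem_iff.mp h
      have : Sum.inl θ ∈ c.support := List.mem_of_mem_tail this
      exact hmax θ (by simp [hS, this])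
  -- second vertex is some inr r1
  have hadj1 : (mechGraph s).Adj (c'.getVert 0) (c'.getVert 1) :=
    c'.adj_getVert_succ (by omega)
  rw [c'.getVert_zero] at hadj1
  obtain ⟨r1, hr1v, hr1⟩ : ∃ r1, c'.getVert 1 = Sum.inr r1 ∧ 0 < s θm r1 := by
    rcases mech_adj_cases hadj1 with ⟨θ, r, ha, hb, hp⟩ | ⟨θ, r, ha, hb, -⟩
    · exact ⟨r, hb, by cases ha; exact hp⟩
    · simp at ha
  -- third vertex is some inl θ1
  have hadj2 : (mechGraph s).Adj (c'.getVert 1) (c'.getVert 2) :=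
    c'.adj_getVert_succ (by omega)
  rw [hr1v] at hadj2
  obtain ⟨θ1, hθ1v, hθ1⟩ : ∃ θ1, c'.getVert 2 = Sum.inl θ1 ∧ 0 < s θ1 r1 := by
    rcases mech_adj_cases hadj2 with ⟨θ, r, ha, hb, -⟩ | ⟨θ, r, ha, hb, hp⟩
    · simp at ha
    · refine ⟨θ, hb, ?_⟩; rw [Sum.inr.injEq] at ha; rw [ha]; exact hp
  -- penultimate vertex is some inr r2
  have hadjL : (mechGraph s).Adj (c'.getVert (L - 1)) (c'.getVert L) := by
    have := c'.adj_getVert_succ (i := L - 1) (by omega)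
    have heq : L - 1 + 1 = L := by omega
    rwa [heq] at this
  rw [c'.getVert_length] at hadjL
  obtain ⟨r2, hr2v, hr2⟩ : ∃ r2, c'.getVert (L - 1) = Sum.inr r2 ∧ 0 < s θm r2 := by
    rcases mech_adj_cases hadjL with ⟨θ, r, ha, hb, -⟩ | ⟨θ, r, ha, hb, hp⟩
    · simp at hb
    · refine ⟨r, ha, ?_⟩; rw [Sum.inl.injEq] at hb; rw [hb]; exact hp
  -- vertex before penultimate is some inl θ2
  have hadjL2 : (mechGraph s).Adj (c'.getVert (L - 2)) (c'.getVert (L - 1)) := by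
    have := c'.adj_getVert_succ (i := L - 2) (by omega)
    have heq : L - 2 + 1 = L - 1 := by omega
    rwa [heq] at this
  rw [hr2v] at hadjL2
  obtain ⟨θ2, hθ2v, hθ2⟩ : ∃ θ2, c'.getVert (L - 2) = Sum.inl θ2 ∧ 0 < s θ2 r2 := by
    rcases mech_adj_cases hadjL2 with ⟨θ, r, ha, hb, hp⟩ | ⟨θ, r, ha, hb, -⟩
    · refine ⟨θ, ha, ?_⟩; rw [Sum.inr.injEq] at hb; rw [hb]; exact hp
    · simp at hb
  -- r1 ≠ r2
  have hr12 : r1 ≠ r2 := by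
    intro h
    have : (1 : ℕ) = L - 1 :=
      cycle_getVert_inj hc' (by omega) (by omega) (by omega) (by omega)
        (by rw [hr1v, hr2v, h])
    omega
  -- θ1 ≠ θm and θ2 ≠ θm
  have hθ1m : θ1 ≠ θm := by
    intro h
    have : (2 : ℕ) = L :=
      cycle_getVert_inj hc' (by omega) (by omega) (by omega) (by omega)
        (by rw [hθ1v, c'.getVert_length, h])
    omega
  have hθ2m : θ2 ≠ θm := by
    intro h
    have : L - 2 = L :=
      cycle_getVert_inj hc' (by omega) (by omega) (by omega) (by omega)
        (by rw [hθ2v, c'.getVert_length, h])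
    omega
  -- θ1, θ2 strictly below θm
  have hθ1le : leΘ θ1 θm := hmax' θ1
    (SimpleGraph.Walk.mem_support_iff_exists_getVert.mpr ⟨2, hθ1v, by omega⟩)
  have hθ2le : leΘ θ2 θm := hmax' θ2
    (SimpleGraph.Walk.mem_support_iff_exists_getVert.mpr ⟨L - 2, hθ2v, by omega⟩)
  have hθ1lt : ¬ leΘ θm θ1 := fun h => hθ1m (antisymm_of leΘ hθ1le h)
  have hθ2lt : ¬ leΘ θm θ2 := fun h => hθ2m (antisymm_of leΘ hθ2le h)
  -- monotonicity gives r1 = r2, contradiction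
  have h12 : leR r1 r2 := hmono θm θ1 hθ1lt r2 r1 hr2 hθ1
  have h21 : leR r2 r1 := hmono θm θ2 hθ2lt r1 r2 hr1 hθ2
  exact hr12 (antisymm_of leR h12 h21)
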